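/- Let S ⊆ ℝ^n be nonempty, convex and compact, φ : ℝ^n → ℝ differentiable with ℓ-Lipschitz continuous gradient, A : ℝ^n → ℝ^s and K : ℝ^n → ℝ^p linear maps, σ_A := ‖A‖², and let G : ℝ^s → ℝ ∪ {+∞} and H : ℝ^p → ℝ ∪ {+∞} be proper, convex and lower semicontinuous (in the paper G = g* and H = f* are Fenchel conjugates of the convex parts). Suppose the parameter sequences satisfy α_k ≥ α_{k+1} > α > 0, δ_k = α/α_k, β_k > 0 and ρ_k > ℓ/2 for all k ≥ 0. Let x^0 ∈ S, y^0 ∈ ℝ^p, z^0 ∈ ℝ^s and for all k ≥ 0 define: x^{k+1} as the point of S minimizing the distance to x^k − (1/ρ_k)(A*z^k − K*y^k + ∇φ(x^k)); y^{k+1} as the unique minimizer over ℝ^p of y ↦ H(y) − ⟨K x^{k+1}, y⟩ + (β_k/2)‖y − y^k‖²; and z^{k+1} as the unique minimizer over ℝ^s of z ↦ G(z) − ⟨A x^{k+1}, z⟩ + (α_k/2)‖z − δ_k z^k‖². Define Ψ(x, y, z) = ⟨z, A x⟩ − G(z) + φ(x) − ⟨K x, y⟩ + H(y), and for k ≥ 2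 set ψ_k = Ψ(x^k, y^k, z^k) + α(1/2 + 2α/(α_k − α))‖z^k − z^{k−1}‖² − ((1/2)(α_{k−2} − α) − 2α(α_{k−1} − α_{k−2})/(α_{k−1} − α))‖z^k‖² and ω_k = [(1/2)(α_{k−2} − α_{k−1}) + 2α((α_{k−2} − α_{k−1})/(α_{k−1} − α) − (α_{k−1} − α_k)/(α_k − α))]‖z^k‖². Then for every k ≥ 2 it holds ψ_{k+1} ≤ ψ_k − c₁^k ‖x^k − x^{k+1}‖² − (β_k/2)‖y^k − y^{k+1}‖² − c₃^k ‖z^{k+1} − z^k‖² + ω_k, where c₁^k = (1/2)(2ρ_k − ℓ − 2σ_A(1/(2(α_{k−1} − α)) + 2α/(α_k − α)²)) and c₃^k = α(1 − 2α(α_k − α_{k+1})/((α_{k+1} − α)(α_k − α))). -/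

import Mathlib

open RealInnerProductSpace


section Aux

variable {E : Type*} [NormedAddCommGroup E] [InnerProductSpace ℝ E]

lemma expand3 (z0 z1 : E) : ‖z1‖ ^ 2 = ‖z0‖ ^ 2 + 2 * ⟪z1 - z0, z0⟫ + ‖z1 - z0‖ ^ 2 := by
  have h := norm_add_sq_real (z1 - z0) z0
  rw [sub_add_cancel] at h
  linarith

lemma expand2 (z0 z1 zm : E) (d : ℝ) :
    ‖z1 - d • zm‖ ^ 2 = ‖z0 - d • zm‖ ^ 2 + ‖z1 - z0‖ ^ 2 +
      2 * ((1 - d) * ⟪z1 - z0, z0⟫ + d * ⟪z1 - z0, z0 - zm⟫) := by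
  simp only [← real_inner_self_eq_norm_sq, inner_sub_left, inner_sub_right,
    real_inner_smul_left, real_inner_smul_right, real_inner_comm zm z0,
    real_inner_comm zm z1, real_inner_comm z0 z1]
  ring

lemma expand1 (z0 z1 : E) (d : ℝ) :
    ‖z1 - d • z0‖ ^ 2 = ‖z0 - d • z0‖ ^ 2 + ‖z1 - z0‖ ^ 2 +
      2 * (1 - d) * ⟪z1 - z0, z0⟫ := by
  simp only [← real_inner_self_eq_norm_sq, inner_sub_left, inner_sub_right,
    real_inner_smul_left, real_inner_smul_right, real_inner_comm z0 z1]
  ring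

lemma norm_combo (m w c : E) (t : ℝ) :
    ‖((1 - t) • m + t • w) - c‖ ^ 2 =
      (1 - t) * ‖m - c‖ ^ 2 + t * ‖w - c‖ ^ 2 - t * (1 - t) * ‖w - m‖ ^ 2 := by
  simp only [← real_inner_self_eq_norm_sq, inner_sub_left, inner_sub_right,
    inner_add_left, inner_add_right, real_inner_smul_left, real_inner_smul_right,
    real_inner_comm c m, real_inner_comm c w, real_inner_comm m w]
  ring

lemma le_ne_top {a b : EReal} (r s : ℝ) (hb : b ≠ ⊤)
    (h : a + (r : EReal) ≤ b + (s : EReal)) : a ≠ ⊤ := by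
  intro ha
  rw [ha, EReal.top_add_coe] at h
  exact (EReal.add_lt_top hb (EReal.coe_ne_top s)).ne (top_le_iff.mp h)

lemma toReal_le_aux {a b : EReal} {r s : ℝ} (ha : a ≠ ⊤) (ha' : a ≠ ⊥) (hb : b ≠ ⊤) (hb' : b ≠ ⊥)
    (h : a + (r : EReal) ≤ b + (s : EReal)) : a.toReal + r ≤ b.toReal + s := by
  lift a to ℝ using ⟨ha, ha'⟩
  lift b to ℝ using ⟨hb, hb'⟩
  rw [← EReal.coe_add, ← EReal.coe_add, EReal.coe_le_coe_iff] at h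
  simpa using h

lemma strong_min (G : E → EReal) (hbot : ∀ v, G v ≠ ⊥)
    (hconv : ∀ v w : E, ∀ a b : ℝ, 0 ≤ a → 0 ≤ b → a + b = 1 →
      G (a • v + b • w) ≤ (a : EReal) * G v + (b : EReal) * G w)
    (b c : E) (τ : ℝ) (hτ : 0 < τ) (m : E) (hm : G m ≠ ⊤)
    (hmin : ∀ w, G m + ((-⟪b, m⟫ + τ / 2 * ‖m - c‖ ^ 2 : ℝ) : EReal) ≤
      G w + ((-⟪b, w⟫ + τ / 2 * ‖w - c‖ ^ 2 : ℝ) : EReal))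
    (w : E) (hw : G w ≠ ⊤) :
    (G m).toReal + (-⟪b, m⟫ + τ / 2 * ‖m - c‖ ^ 2) + τ / 2 * ‖w - m‖ ^ 2 ≤
      (G w).toReal + (-⟪b, w⟫ + τ / 2 * ‖w - c‖ ^ 2) := by
  set gm := (G m).toReal with hgm
  set gw := (G w).toReal with hgw
  have key : ∀ t : ℝ, 0 < t → t < 1 →
      gm + (-⟪b, m⟫ + τ / 2 * ‖m - c‖ ^ 2) + τ / 2 * (1 - t) * ‖w - m‖ ^ 2 ≤
      gw + (-⟪b, w⟫ + τ / 2 * ‖w - c‖ ^ 2) := by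
    intro t ht0 ht1
    set u := (1 - t) • m + t • w with hu
    have hcu : G u ≤ (((1 - t) * gm + t * gw : ℝ) : EReal) := by
      have h1 := hconv m w (1 - t) t (by linarith) ht0.le (by ring)
      rw [← EReal.coe_toReal hm (hbot m), ← EReal.coe_toReal hw (hbot w), ← hgm, ← hgw,
        ← EReal.coe_mul, ← EReal.coe_mul, ← EReal.coe_add] at h1
      exact h1
    have hutop : G u ≠ ⊤ := ne_top_of_le_ne_top (EReal.coe_ne_top _) hcu
    have hgu : (G u).toReal ≤ (1 - t) * gm + t * gw := by
      have := hcu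
      rw [← EReal.coe_toReal hutop (hbot u)] at this
      exact_mod_cast this
    have hminu : gm + (-⟪b, m⟫ + τ / 2 * ‖m - c‖ ^ 2) ≤
        (G u).toReal + (-⟪b, u⟫ + τ / 2 * ‖u - c‖ ^ 2) :=
      toReal_le_aux hm (hbot m) hutop (hbot u) (hmin u)
    have hq : (-⟪b, u⟫ + τ / 2 * ‖u - c‖ ^ 2) =
        (1 - t) * (-⟪b, m⟫ + τ / 2 * ‖m - c‖ ^ 2) + t * (-⟪b, w⟫ + τ / 2 * ‖w - c‖ ^ 2)
          - τ / 2 * (t * (1 - t)) * ‖w - m‖ ^ 2 := by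
      rw [hu, norm_combo]
      simp only [inner_add_right, real_inner_smul_right]
      ring
    rw [hq] at hminu
    have hdiv : t * (gm + (-⟪b, m⟫ + τ / 2 * ‖m - c‖ ^ 2) + τ / 2 * (1 - t) * ‖w - m‖ ^ 2) ≤
        t * (gw + (-⟪b, w⟫ + τ / 2 * ‖w - c‖ ^ 2)) := by nlinarith [hgu, hminu]
    exact le_of_mul_le_mul_left hdiv ht0
  apply le_of_forall_pos_le_add
  intro ε hε
  set D := ‖w - m‖ ^ 2 with hD
  have hD0 : 0 ≤ D := sq_nonneg _
  set t := min (1/2 : ℝ) (ε / (τ * D + 1)) with htdef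
  have ht0 : 0 < t := lt_min (by norm_num) (div_pos hε (by positivity))
  have ht1 : t < 1 := lt_of_le_of_lt (min_le_left _ _) (by norm_num)
  have hte : t * (τ * D + 1) ≤ ε := by
    rw [← le_div_iff₀ (by positivity)]
    exact min_le_right _ _
  have hk := key t ht0 ht1
  nlinarith [hk, hte, ht0.le, mul_nonneg hτ.le hD0]

variable [CompleteSpace E]

lemma descent_lemma (φ : E → ℝ) (gφ : E → E) (ℓ : ℝ)
    (hφ : ∀ u, HasGradientAt φ (gφ u) u)
    (hlip : ∀ u v, ‖gφ u - gφ v‖ ≤ ℓ * ‖u - v‖) (u v : E) :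
    φ v ≤ φ u + ⟪gφ u, v - u⟫ + ℓ / 2 * ‖v - u‖ ^ 2 := by
  set d := v - u with hd
  set F : ℝ → ℝ := fun t => φ (u + t • d) - t * ⟪gφ u, d⟫ - t ^ 2 * (ℓ / 2 * ‖d‖ ^ 2) with hF
  have hFder : ∀ t : ℝ, HasDerivAt F
      (⟪gφ (u + t • d), d⟫ - ⟪gφ u, d⟫ - 2 * t * (ℓ / 2 * ‖d‖ ^ 2)) t := by
    intro t
    have hc : HasDerivAt (fun t : ℝ => u + t • d) d t := by
      simpa using ((hasDerivAt_id t).smul_const d).const_add u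
    have hφ' := (hφ (u + t • d)).hasFDerivAt
    have h1 : HasDerivAt (fun t : ℝ => φ (u + t • d)) ⟪gφ (u + t • d), d⟫ t := by
      have := hφ'.comp_hasDerivAt t hc
      simpa [InnerProductSpace.toDual_apply_apply, Function.comp_def] using this
    have h2 : HasDerivAt (fun t : ℝ => t * ⟪gφ u, d⟫) ⟪gφ u, d⟫ t := by
      simpa using (hasDerivAt_id t).mul_const ⟪gφ u, d⟫
    have h3 : HasDerivAt (fun t : ℝ => t ^ 2 * (ℓ / 2 * ‖d‖ ^ 2))
        (2 * t * (ℓ / 2 * ‖d‖ ^ 2)) t := by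
      simpa using (hasDerivAt_pow 2 t).mul_const (ℓ / 2 * ‖d‖ ^ 2)
    exact (h1.sub h2).sub h3
  have hanti : AntitoneOn F (Set.Icc (0 : ℝ) 1) := by
    apply antitoneOn_of_deriv_nonpos (convex_Icc 0 1)
    · exact fun t _ => (hFder t).continuousAt.continuousWithinAt
    · exact fun t _ => (hFder t).differentiableAt.differentiableWithinAt
    · intro t ht
      rw [interior_Icc, Set.mem_Ioo] at ht
      rw [(hFder t).deriv]
      have e1 : ⟪gφ (u + t • d), d⟫ - ⟪gφ u, d⟫ = ⟪gφ (u + t • d) - gφ u, d⟫ := by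
        rw [inner_sub_left]
      have e2 : ⟪gφ (u + t • d) - gφ u, d⟫ ≤ ‖gφ (u + t • d) - gφ u‖ * ‖d‖ :=
        real_inner_le_norm _ _
      have e3 : ‖gφ (u + t • d) - gφ u‖ ≤ ℓ * ‖u + t • d - u‖ := hlip _ _
      have e4 : ‖u + t • d - u‖ = t * ‖d‖ := by
        rw [add_sub_cancel_left, norm_smul, Real.norm_eq_abs, abs_of_pos ht.1]
      have e5 : ‖gφ (u + t • d) - gφ u‖ * ‖d‖ ≤ ℓ * t * ‖d‖ * ‖d‖ := by
        rw [e4] at e3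
        have := mul_le_mul_of_nonneg_right e3 (norm_nonneg d)
        linarith
      nlinarith [e1, e2, e5]
  have h01 : F 1 ≤ F 0 := hanti (Set.mem_Icc.mpr ⟨le_refl 0, zero_le_one⟩)
    (Set.mem_Icc.mpr ⟨zero_le_one, le_refl 1⟩) zero_le_one
  have hF1 : F 1 = φ v - ⟪gφ u, d⟫ - ℓ / 2 * ‖d‖ ^ 2 := by
    simp [hF, hd]
  have hF0 : F 0 = φ u := by simp [hF]
  rw [hF1, hF0] at h01
  linarith

end Aux

set_option maxHeartbeats 2000000 in
lemma key_ineq (αl αmm αm αK αp ρ β ℓ σ nA : ℝ)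
    (φ0 φ1 g0 g1 h0 h1 : ℝ)
    (zA1 z0A1 z0A0 K11 K10 K00 : ℝ)
    (X Y Z Pn iz0 iZP iAz nz0 nz1 : ℝ)
    (hαl : 0 < αl) (hm : αl < αm) (hK : αl < αK) (hp : αl < αp)
    (hmon1 : αK ≤ αm) (hmon2 : αp ≤ αK)
    (hσ : σ = nA ^ 2) (hnA : 0 ≤ nA) (hX : 0 ≤ X) (hZ : 0 ≤ Z) (hPn : 0 ≤ Pn)
    (hE3 : nz1 = nz0 + 2 * iz0 + Z ^ 2)
    (hCS1 : iAz ≤ nA * X * Z) (hCS2 : iZP ≤ Z * Pn)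
    (hA : φ1 - φ0 + (z0A1 - z0A0) - (K10 - K00) ≤ -(ρ - ℓ / 2) * X ^ 2)
    (hB : h1 - K11 + β / 2 * Y ^ 2 ≤ h0 - K10)
    (hC : g0 - g1 + (zA1 - z0A1) ≤ iAz + αl * iZP + (αm - αl) * iz0)
    (hD : αK * Z ^ 2 + (αK - αl) * iz0 ≤ g0 - g1 + (zA1 - z0A1)) :
    zA1 - g1 + (φ1 - K11) + h1 +
      (αl * (1 / 2 + 2 * αl / (αp - αl)) * Z ^ 2 -
        ((1 / 2) * (αm - αl) - 2 * αl * (αK - αm) / (αK - αl)) * nz1) ≤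
    z0A0 - g0 + (φ0 - K00) + h0 +
      (αl * (1 / 2 + 2 * αl / (αK - αl)) * Pn ^ 2 -
        ((1 / 2) * (αmm - αl) - 2 * αl * (αm - αmm) / (αm - αl)) * nz0) +
      (-((1 / 2) * (2 * ρ - ℓ - 2 * σ * (1 / (2 * (αm - αl)) + 2 * αl / (αK - αl) ^ 2))) * X ^ 2 -
        (β / 2) * Y ^ 2 -
        (αl * (1 - 2 * αl * (αK - αp) / ((αp - αl) * (αK - αl)))) * Z ^ 2 +
        ((1 / 2) * (αmm - αm) + 2 * αl * ((αmm - αm) / (αm - αl) - (αm - αK) / (αK - αl))) * nz0) := by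
  have hdm : (0 : ℝ) < αm - αl := by linarith
  have hdK : (0 : ℝ) < αK - αl := by linarith
  have hdp : (0 : ℝ) < αp - αl := by linarith
  set c : ℝ := 2 * αl * (αm - αK) / (αK - αl) with hc
  set lam : ℝ := 4 * αl / (αK - αl) with hlam
  have hc0 : 0 ≤ c := by
    rw [hc]; exact div_nonneg (by nlinarith) hdK.le
  have hlam0 : 0 ≤ lam := by
    rw [hlam]; exact div_nonneg (by linarith) hdK.le
  have h1' : αK * Z ^ 2 - iAz - αl * iZP ≤ (αm - αK) * iz0 := by linarith [hC, hD]
  have hmul := mul_le_mul_of_nonneg_left h1' hlam0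
  have ecl : lam * (αm - αK) = 2 * c := by
    rw [hlam, hc]; field_simp; ring
  have ecl' : lam * ((αm - αK) * iz0) = 2 * c * iz0 := by rw [← mul_assoc, ecl]
  have h2 : -(2 * c) * iz0 ≤ lam * iAz + lam * (αl * iZP) - lam * (αK * Z ^ 2) := by
    linarith [hmul, ecl']
  have hY1 : iAz ≤ σ / (2 * (αm - αl)) * X ^ 2 + (αm - αl) / 2 * Z ^ 2 := by
    have e : σ / (2 * (αm - αl)) * X ^ 2 + (αm - αl) / 2 * Z ^ 2 - nA * X * Z =
        (nA * X - (αm - αl) * Z) ^ 2 / (2 * (αm - αl)) := by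
      rw [hσ]; field_simp; ring
    have h := div_nonneg (sq_nonneg (nA * X - (αm - αl) * Z)) (by linarith : (0:ℝ) ≤ 2 * (αm - αl))
    linarith [hCS1]
  have hY2'' : iAz ≤ σ / (2 * (αK - αl)) * X ^ 2 + (αK - αl) / 2 * Z ^ 2 := by
    have e : σ / (2 * (αK - αl)) * X ^ 2 + (αK - αl) / 2 * Z ^ 2 - nA * X * Z =
        (nA * X - (αK - αl) * Z) ^ 2 / (2 * (αK - αl)) := by
      rw [hσ]; field_simp; ring
    have h := div_nonneg (sq_nonneg (nA * X - (αK - αl) * Z)) (by linarith : (0:ℝ) ≤ 2 * (αK - αl))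
    linarith [hCS1]
  have hmul2 := mul_le_mul_of_nonneg_left hY2'' hlam0
  have e2 : lam * (σ / (2 * (αK - αl)) * X ^ 2 + (αK - αl) / 2 * Z ^ 2) =
      σ * (lam / (2 * (αK - αl))) * X ^ 2 + (lam * ((αK - αl) / 2)) * Z ^ 2 := by ring
  have e3 : lam * ((αK - αl) / 2) = 2 * αl := by rw [hlam]; field_simp; ring
  have e3' : (lam * ((αK - αl) / 2)) * Z ^ 2 = (2 * αl) * Z ^ 2 := by rw [e3]
  have hY2 : lam * iAz ≤ σ * (lam / (2 * (αK - αl))) * X ^ 2 + (2 * αl) * Z ^ 2 := by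
    linarith [hmul2, e2, e3']
  have hZP : iZP ≤ Z ^ 2 / 2 + Pn ^ 2 / 2 := by nlinarith [hCS2, sq_nonneg (Z - Pn)]
  have hco : 0 ≤ αl + lam * αl := by nlinarith
  have hmul3 := mul_le_mul_of_nonneg_left hZP hco
  have e4 : αl + lam * αl = 2 * (αl * (1 / 2 + 2 * αl / (αK - αl))) := by
    rw [hlam]; field_simp; ring
  have e4' : (αl + lam * αl) * (Z ^ 2 / 2 + Pn ^ 2 / 2) =
      (αl * (1 / 2 + 2 * αl / (αK - αl))) * Z ^ 2 +
      (αl * (1 / 2 + 2 * αl / (αK - αl))) * Pn ^ 2 := by rw [e4]; ring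
  have hY3 : αl * iZP + lam * (αl * iZP) ≤
      (αl * (1 / 2 + 2 * αl / (αK - αl))) * Z ^ 2 +
      (αl * (1 / 2 + 2 * αl / (αK - αl))) * Pn ^ 2 := by
    linarith [hmul3, e4']
  have eT' : αl * (1 / 2 + 2 * αl / (αK - αl)) + αl * (1 / 2 + 2 * αl / (αp - αl)) +
      αl * (1 - 2 * αl * (αK - αp) / ((αp - αl) * (αK - αl))) + 2 * αl - lam * αK = 0 := by
    rw [hlam]; field_simp; ring
  have eTZ : (αl * (1 / 2 + 2 * αl / (αK - αl)) + αl * (1 / 2 + 2 * αl / (αp - αl)) +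
      αl * (1 - 2 * αl * (αK - αp) / ((αp - αl) * (αK - αl))) + 2 * αl - lam * αK) * Z ^ 2 = 0 := by
    rw [eT', zero_mul]
  have eE' : σ * (1 / (2 * (αm - αl)) + 2 * αl / (αK - αl) ^ 2) =
      σ / (2 * (αm - αl)) + σ * (lam / (2 * (αK - αl))) := by
    rw [hlam]; field_simp; ring
  have eEX : σ * (1 / (2 * (αm - αl)) + 2 * αl / (αK - αl) ^ 2) * X ^ 2 =
      σ / (2 * (αm - αl)) * X ^ 2 + σ * (lam / (2 * (αK - αl))) * X ^ 2 := by
    rw [eE']; ring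
  have ebp : ((1 / 2) * (αm - αl) - 2 * αl * (αK - αm) / (αK - αl)) = (αm - αl) / 2 + c := by
    rw [hc]; field_simp; ring
  have ebpz : ((1 / 2) * (αm - αl) - 2 * αl * (αK - αm) / (αK - αl)) * nz1 =
      ((αm - αl) / 2 + c) * nz1 := by rw [ebp]
  have eων : ((1 / 2) * (αmm - αl) - 2 * αl * (αm - αmm) / (αm - αl)) -
      ((1 / 2) * (αmm - αm) + 2 * αl * ((αmm - αm) / (αm - αl) - (αm - αK) / (αK - αl))) =
      (αm - αl) / 2 + c := by
    rw [hc]; field_simp; ring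
  have eωz : ((1 / 2) * (αmm - αl) - 2 * αl * (αm - αmm) / (αm - αl)) * nz0 -
      ((1 / 2) * (αmm - αm) + 2 * αl * ((αmm - αm) / (αm - αl) - (αm - αK) / (αK - αl))) * nz0 =
      ((αm - αl) / 2 + c) * nz0 := by
    rw [show ((1 / 2) * (αmm - αl) - 2 * αl * (αm - αmm) / (αm - αl)) * nz0 -
      ((1 / 2) * (αmm - αm) + 2 * αl * ((αmm - αm) / (αm - αl) - (αm - αK) / (αK - αl))) * nz0 =
      (((1 / 2) * (αmm - αl) - 2 * αl * (αm - αmm) / (αm - αl)) -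
      ((1 / 2) * (αmm - αm) + 2 * αl * ((αmm - αm) / (αm - αl) - (αm - αK) / (αK - αl)))) * nz0
      from by ring, eων]
  have E3m : ((αm - αl) / 2 + c) * nz1 = ((αm - αl) / 2 + c) * nz0 +
      ((αm - αl) / 2 + c) * (2 * iz0 + Z ^ 2) := by rw [hE3]; ring
  have hcZ : 0 ≤ c * Z ^ 2 := mul_nonneg hc0 (sq_nonneg Z)
  linarith [hA, hB, hC, h2, hY1, hY2, hY3, eTZ, eEX, ebpz, eωz, E3m, hcZ]

set_option maxHeartbeats 4000000 in
/-- (Descent inequality for the DPFS iteration, Theorem 4.1 of the paper.)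
With `G`, `H` proper convex lsc (playing the roles of `g*`, `f*`), step sizes
`α_k ≥ α_{k+1} > α > 0`, `δ_k = α/α_k`, `β_k > 0`, `ρ_k > ℓ/2`, and iterates generated by
the projection/proximal updates, the discrete energy `ψ_k` satisfies for all `k ≥ 2` the
inequality `ψ_{k+1} ≤ ψ_k − c₁^k‖x^k − x^{k+1}‖² − (β_k/2)‖y^k − y^{k+1}‖²
− c₃^k‖z^{k+1} − z^k‖² + ω_k`. -/
theorem stmt_3 (n s p : ℕ)
    (S : Set (EuclideanSpace ℝ (Fin n)))
    (hSne : S.Nonempty) (hSconv : Convex ℝ S) (hScomp : IsCompact S)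
    (φ : EuclideanSpace ℝ (Fin n) → ℝ)
    (gφ : EuclideanSpace ℝ (Fin n) → EuclideanSpace ℝ (Fin n))
    (ℓ : ℝ)
    (hφ : ∀ u, HasGradientAt φ (gφ u) u)
    (hφlip : ∀ u v, ‖gφ u - gφ v‖ ≤ ℓ * ‖u - v‖)
    (A : EuclideanSpace ℝ (Fin n) →L[ℝ] EuclideanSpace ℝ (Fin s))
    (K : EuclideanSpace ℝ (Fin n) →L[ℝ] EuclideanSpace ℝ (Fin p))
    (G : EuclideanSpace ℝ (Fin s) → EReal)
    (hGproper₁ : ∀ v, G v ≠ ⊥) (hGproper₂ : ∃ v, G v ≠ ⊤)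
    (hGconv : ∀ v w : EuclideanSpace ℝ (Fin s), ∀ a b : ℝ, 0 ≤ a → 0 ≤ b → a + b = 1 →
      G (a • v + b • w) ≤ (a : EReal) * G v + (b : EReal) * G w)
    (hGlsc : LowerSemicontinuous G)
    (H : EuclideanSpace ℝ (Fin p) → EReal)
    (hHproper₁ : ∀ v, H v ≠ ⊥) (hHproper₂ : ∃ v, H v ≠ ⊤)
    (hHconv : ∀ v w : EuclideanSpace ℝ (Fin p), ∀ a b : ℝ, 0 ≤ a → 0 ≤ b → a + b = 1 →
      H (a • v + b • w) ≤ (a : EReal) * H v + (b : EReal) * H w)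
    (hHlsc : LowerSemicontinuous H)
    (α β ρ δ : ℕ → ℝ) (αl : ℝ) (hαl : 0 < αl)
    (hα : ∀ k, α (k + 1) ≤ α k ∧ αl < α (k + 1))
    (hα0 : αl < α 0)
    (hδ : ∀ k, δ k = αl / α k)
    (hβ : ∀ k, 0 < β k)
    (hρ : ∀ k, ℓ / 2 < ρ k)
    (x : ℕ → EuclideanSpace ℝ (Fin n))
    (y : ℕ → EuclideanSpace ℝ (Fin p))
    (z : ℕ → EuclideanSpace ℝ (Fin s))
    (hx0 : x 0 ∈ S)
    (hxS : ∀ k, x (k + 1) ∈ S)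
    (hxmin : ∀ k, ∀ v ∈ S,
      ‖x (k + 1) - (x k - (ρ k)⁻¹ •
        (ContinuousLinearMap.adjoint A (z k) - ContinuousLinearMap.adjoint K (y k) + gφ (x k)))‖ ≤
      ‖v - (x k - (ρ k)⁻¹ •
        (ContinuousLinearMap.adjoint A (z k) - ContinuousLinearMap.adjoint K (y k) + gφ (x k)))‖)
    (hymin : ∀ k, ∀ w : EuclideanSpace ℝ (Fin p),
      H (y (k + 1)) + ((-⟪K (x (k + 1)), y (k + 1)⟫ + β k / 2 * ‖y (k + 1) - y k‖ ^ 2 : ℝ) : EReal) ≤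
      H w + ((-⟪K (x (k + 1)), w⟫ + β k / 2 * ‖w - y k‖ ^ 2 : ℝ) : EReal))
    (hzmin : ∀ k, ∀ w : EuclideanSpace ℝ (Fin s),
      G (z (k + 1)) + ((-⟪A (x (k + 1)), z (k + 1)⟫ + α k / 2 * ‖z (k + 1) - δ k • z k‖ ^ 2 : ℝ) : EReal) ≤
      G w + ((-⟪A (x (k + 1)), w⟫ + α k / 2 * ‖w - δ k • z k‖ ^ 2 : ℝ) : EReal))
    (ψ : ℕ → EReal)
    (hψ : ∀ k, 2 ≤ k → ψ k =
      ((⟪z k, A (x k)⟫ : ℝ) : EReal) - G (z k) + ((φ (x k) - ⟪K (x k), y k⟫ : ℝ) : EReal) + H (y k) +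
      ((αl * (1 / 2 + 2 * αl / (α k - αl)) * ‖z k - z (k - 1)‖ ^ 2 -
        ((1 / 2) * (α (k - 2) - αl) - 2 * αl * (α (k - 1) - α (k - 2)) / (α (k - 1) - αl)) *
          ‖z k‖ ^ 2 : ℝ) : EReal))
    (ω : ℕ → ℝ)
    (hω : ∀ k, 2 ≤ k → ω k =
      ((1 / 2) * (α (k - 2) - α (k - 1)) +
        2 * αl * ((α (k - 2) - α (k - 1)) / (α (k - 1) - αl) -
          (α (k - 1) - α k) / (α k - αl))) * ‖z k‖ ^ 2) :
    ∀ k, 2 ≤ k → ψ (k + 1) ≤ ψ k +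
      ((-((1 / 2) * (2 * ρ k - ℓ - 2 * ‖A‖ ^ 2 *
            (1 / (2 * (α (k - 1) - αl)) + 2 * αl / (α k - αl) ^ 2))) * ‖x k - x (k + 1)‖ ^ 2 -
        (β k / 2) * ‖y k - y (k + 1)‖ ^ 2 -
        (αl * (1 - 2 * αl * (α k - α (k + 1)) / ((α (k + 1) - αl) * (α k - αl)))) *
          ‖z (k + 1) - z k‖ ^ 2 + ω k : ℝ) : EReal) := by
  intro k hk
  obtain ⟨j, rfl⟩ : ∃ j, k = j + 2 := ⟨k - 2, by omega⟩
  -- index facts & hypothesis instances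
  have hψ1 := hψ (j + 2 + 1) (by omega)
  have hψ0 := hψ (j + 2) (by omega)
  have hω0 := hω (j + 2) (by omega)
  have hz2 := hzmin (j + 2)
  have hz1 := hzmin (j + 1)
  have hy2 := hymin (j + 2)
  have hy1 := hymin (j + 1)
  simp only [show j + 2 + 1 = j + 3 from by omega, show j + 3 - 1 = j + 2 from by omega,
    show j + 3 - 2 = j + 1 from by omega, show j + 2 - 1 = j + 1 from by omega,
    show j + 2 - 2 = j from by omega, show j + 1 + 1 = j + 2 from by omega]
    at hψ1 hψ0 hω0 hz2 hz1 hy2 hy1 ⊢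
  -- parameter facts
  have hαm : αl < α (j + 1) := (hα j).2
  have hαK : αl < α (j + 2) := (hα (j + 1)).2
  have hαp : αl < α (j + 3) := (hα (j + 2)).2
  have hmon1 : α (j + 2) ≤ α (j + 1) := (hα (j + 1)).1
  have hmon2 : α (j + 3) ≤ α (j + 2) := (hα (j + 2)).1
  -- finiteness
  obtain ⟨vG, hvG⟩ := hGproper₂
  obtain ⟨vH, hvH⟩ := hHproper₂
  have hG1top : G (z (j + 3)) ≠ ⊤ := le_ne_top _ _ hvG (hz2 vG)
  have hG0top : G (z (j + 2)) ≠ ⊤ := le_ne_top _ _ hvG (hz1 vG)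
  have hH1top : H (y (j + 3)) ≠ ⊤ := le_ne_top _ _ hvH (hy2 vH)
  have hH0top : H (y (j + 2)) ≠ ⊤ := le_ne_top _ _ hvH (hy1 vH)
  -- δ identities
  have hδm : α (j + 1) * δ (j + 1) = αl := by
    have hne : α (j + 1) ≠ 0 := by linarith
    rw [hδ]; field_simp
  have hδK : α (j + 2) * δ (j + 2) = αl := by
    have hne : α (j + 2) ≠ 0 := by linarith
    rw [hδ]; field_simp
  -- membership facts
  have hx1S : x (j + 3) ∈ S := by have := hxS (j + 2); rwa [show j + 2 + 1 = j + 3 from by omega] at this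
  have hx0S : x (j + 2) ∈ S := by have := hxS (j + 1); rwa [show j + 1 + 1 = j + 2 from by omega] at this
  -- (A) the x-descent inequality
  have hA : φ (x (j + 3)) - φ (x (j + 2)) +
      (⟪z (j + 2), A (x (j + 3))⟫ - ⟪z (j + 2), A (x (j + 2))⟫) -
      (⟪K (x (j + 3)), y (j + 2)⟫ - ⟪K (x (j + 2)), y (j + 2)⟫) ≤
      -(ρ (j + 2) - ℓ / 2) * ‖x (j + 2) - x (j + 3)‖ ^ 2 := by
    by_cases hx01 : x (j + 3) = x (j + 2)
    · rw [hx01]; simp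
    · have hℓ0 : 0 ≤ ℓ := by
        have h := hφlip (x (j + 3)) (x (j + 2))
        have hpos : 0 < ‖x (j + 3) - x (j + 2)‖ := by
          rw [norm_pos_iff, sub_ne_zero]; exact hx01
        nlinarith [norm_nonneg (gφ (x (j + 3)) - gφ (x (j + 2)))]
      have hρ0 : 0 < ρ (j + 2) := lt_of_le_of_lt (by linarith) (hρ (j + 2))
      haveI := hSne.to_subtype
      set W := ContinuousLinearMap.adjoint A (z (j + 2)) -
        ContinuousLinearMap.adjoint K (y (j + 2)) + gφ (x (j + 2)) with hW
      set u := x (j + 2) - (ρ (j + 2))⁻¹ • W with hu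
      have hmin' : ∀ v ∈ S, ‖x (j + 3) - u‖ ≤ ‖v - u‖ := by
        intro v hv
        have h := hxmin (j + 2) v hv
        rwa [show j + 2 + 1 = j + 3 from by omega] at h
      have hbdd : BddBelow (Set.range fun w : S => ‖u - ↑w‖) := by
        refine ⟨0, ?_⟩; rintro r ⟨w, rfl⟩; exact norm_nonneg _
      have heq : ‖u - x (j + 3)‖ = ⨅ w : S, ‖u - ↑w‖ := by
        refine le_antisymm (le_ciInf fun w => ?_) (ciInf_le hbdd ⟨x (j + 3), hx1S⟩)
        rw [norm_sub_rev u (x (j + 3)), norm_sub_rev u ↑w]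
        exact hmin' w w.2
      have hvar := (norm_eq_iInf_iff_real_inner_le_zero hSconv hx1S).mp heq (x (j + 2)) hx0S
      have hexp : ⟪u - x (j + 3), x (j + 2) - x (j + 3)⟫ =
          ‖x (j + 2) - x (j + 3)‖ ^ 2 - (ρ (j + 2))⁻¹ * ⟪W, x (j + 2) - x (j + 3)⟫ := by
        rw [hu, show x (j + 2) - (ρ (j + 2))⁻¹ • W - x (j + 3) =
          (x (j + 2) - x (j + 3)) - (ρ (j + 2))⁻¹ • W from by abel,
          inner_sub_left, real_inner_smul_left, real_inner_self_eq_norm_sq]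
      have hw1 : ‖x (j + 2) - x (j + 3)‖ ^ 2 ≤ (ρ (j + 2))⁻¹ * ⟪W, x (j + 2) - x (j + 3)⟫ := by
        rw [hexp] at hvar; linarith
      have hw2 : ρ (j + 2) * ‖x (j + 2) - x (j + 3)‖ ^ 2 ≤ ⟪W, x (j + 2) - x (j + 3)⟫ := by
        have h3 := mul_le_mul_of_nonneg_left hw1 hρ0.le
        rwa [← mul_assoc, mul_inv_cancel₀ hρ0.ne', one_mul] at h3
      have hWexp : ⟪W, x (j + 2) - x (j + 3)⟫ =
          ⟪z (j + 2), A (x (j + 2)) - A (x (j + 3))⟫ -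
          ⟪y (j + 2), K (x (j + 2)) - K (x (j + 3))⟫ +
          ⟪gφ (x (j + 2)), x (j + 2) - x (j + 3)⟫ := by
        rw [hW, inner_add_left, inner_sub_left, ContinuousLinearMap.adjoint_inner_left,
          ContinuousLinearMap.adjoint_inner_left, map_sub, map_sub]
      have hdes := descent_lemma φ gφ ℓ hφ hφlip (x (j + 2)) (x (j + 3))
      have e1 : ⟪z (j + 2), A (x (j + 2)) - A (x (j + 3))⟫ =
          ⟪z (j + 2), A (x (j + 2))⟫ - ⟪z (j + 2), A (x (j + 3))⟫ := inner_sub_right _ _ _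
      have e2 : ⟪y (j + 2), K (x (j + 2)) - K (x (j + 3))⟫ =
          ⟪y (j + 2), K (x (j + 2))⟫ - ⟪y (j + 2), K (x (j + 3))⟫ := inner_sub_right _ _ _
      have e3 : ⟪gφ (x (j + 2)), x (j + 3) - x (j + 2)⟫ =
          - ⟪gφ (x (j + 2)), x (j + 2) - x (j + 3)⟫ := by
        rw [show x (j + 3) - x (j + 2) = -(x (j + 2) - x (j + 3)) from by abel, inner_neg_right]
      have e4 : ℓ / 2 * ‖x (j + 3) - x (j + 2)‖ ^ 2 = ℓ / 2 * ‖x (j + 2) - x (j + 3)‖ ^ 2 := by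
        rw [norm_sub_rev]
      have e5 : ⟪K (x (j + 3)), y (j + 2)⟫ = ⟪y (j + 2), K (x (j + 3))⟫ := real_inner_comm _ _
      have e6 : ⟪K (x (j + 2)), y (j + 2)⟫ = ⟪y (j + 2), K (x (j + 2))⟫ := real_inner_comm _ _
      linarith [hw2, hWexp, hdes, e1, e2, e3, e4, e5, e6]
  -- (B) the y-descent inequality
  have hB : (H (y (j + 3))).toReal - ⟪K (x (j + 3)), y (j + 3)⟫ +
      β (j + 2) / 2 * ‖y (j + 2) - y (j + 3)‖ ^ 2 ≤
      (H (y (j + 2))).toReal - ⟪K (x (j + 3)), y (j + 2)⟫ := by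
    have h := toReal_le_aux hH1top (hHproper₁ _) hH0top (hHproper₁ _) (hy2 (y (j + 2)))
    rw [sub_self, norm_zero] at h
    rw [norm_sub_rev (y (j + 2)) (y (j + 3))]
    linarith [h]
  -- (C) and (D): the two z-step strong minimality inequalities in scalar form
  have hCs := strong_min G hGproper₁ hGconv (A (x (j + 2))) (δ (j + 1) • z (j + 1)) (α (j + 1))
    (by linarith) (z (j + 2)) hG0top hz1 (z (j + 3)) hG1top
  have hDs := strong_min G hGproper₁ hGconv (A (x (j + 3))) (δ (j + 2) • z (j + 2)) (α (j + 2))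
    (by linarith) (z (j + 3)) hG1top hz2 (z (j + 2)) hG0top
  have eiAz : ⟪A (x (j + 3)) - A (x (j + 2)), z (j + 3) - z (j + 2)⟫ =
      (⟪z (j + 3), A (x (j + 3))⟫ - ⟪z (j + 2), A (x (j + 3))⟫) -
      (⟪A (x (j + 2)), z (j + 3)⟫ - ⟪A (x (j + 2)), z (j + 2)⟫) := by
    rw [inner_sub_left, inner_sub_right, inner_sub_right,
      real_inner_comm (A (x (j + 3))) (z (j + 3)), real_inner_comm (A (x (j + 3))) (z (j + 2))]
  have hC : (G (z (j + 2))).toReal - (G (z (j + 3))).toReal +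
      (⟪z (j + 3), A (x (j + 3))⟫ - ⟪z (j + 2), A (x (j + 3))⟫) ≤
      ⟪A (x (j + 3)) - A (x (j + 2)), z (j + 3) - z (j + 2)⟫ +
      αl * ⟪z (j + 3) - z (j + 2), z (j + 2) - z (j + 1)⟫ +
      (α (j + 1) - αl) * ⟪z (j + 3) - z (j + 2), z (j + 2)⟫ := by
    have hex := expand2 (z (j + 2)) (z (j + 3)) (z (j + 1)) (δ (j + 1))
    have hexm : α (j + 1) / 2 * ‖z (j + 3) - δ (j + 1) • z (j + 1)‖ ^ 2 =
        α (j + 1) / 2 * ‖z (j + 2) - δ (j + 1) • z (j + 1)‖ ^ 2 +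
        α (j + 1) / 2 * ‖z (j + 3) - z (j + 2)‖ ^ 2 +
        α (j + 1) * ((1 - δ (j + 1)) * ⟪z (j + 3) - z (j + 2), z (j + 2)⟫ +
          δ (j + 1) * ⟪z (j + 3) - z (j + 2), z (j + 2) - z (j + 1)⟫) := by
      rw [hex]; ring
    have eδ1 : α (j + 1) * δ (j + 1) * ⟪z (j + 3) - z (j + 2), z (j + 2)⟫ =
        αl * ⟪z (j + 3) - z (j + 2), z (j + 2)⟫ := by rw [hδm]
    have eδ2 : α (j + 1) * δ (j + 1) * ⟪z (j + 3) - z (j + 2), z (j + 2) - z (j + 1)⟫ =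
        αl * ⟪z (j + 3) - z (j + 2), z (j + 2) - z (j + 1)⟫ := by rw [hδm]
    linarith [hCs, hexm, eδ1, eδ2, eiAz]
  have hD : α (j + 2) * ‖z (j + 3) - z (j + 2)‖ ^ 2 +
      (α (j + 2) - αl) * ⟪z (j + 3) - z (j + 2), z (j + 2)⟫ ≤
      (G (z (j + 2))).toReal - (G (z (j + 3))).toReal +
      (⟪z (j + 3), A (x (j + 3))⟫ - ⟪z (j + 2), A (x (j + 3))⟫) := by
    have hex := expand1 (z (j + 2)) (z (j + 3)) (δ (j + 2))
    have hexm : α (j + 2) / 2 * ‖z (j + 3) - δ (j + 2) • z (j + 2)‖ ^ 2 =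
        α (j + 2) / 2 * ‖z (j + 2) - δ (j + 2) • z (j + 2)‖ ^ 2 +
        α (j + 2) / 2 * ‖z (j + 3) - z (j + 2)‖ ^ 2 +
        α (j + 2) * (1 - δ (j + 2)) * ⟪z (j + 3) - z (j + 2), z (j + 2)⟫ := by
      rw [hex]; ring
    have eδ3 : α (j + 2) * δ (j + 2) * ⟪z (j + 3) - z (j + 2), z (j + 2)⟫ =
        αl * ⟪z (j + 3) - z (j + 2), z (j + 2)⟫ := by rw [hδK]
    have ecz : α (j + 2) / 2 * ‖z (j + 2) - z (j + 3)‖ ^ 2 =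
        α (j + 2) / 2 * ‖z (j + 3) - z (j + 2)‖ ^ 2 := by
      rw [norm_sub_rev]
    have ec1 : ⟪A (x (j + 3)), z (j + 3)⟫ = ⟪z (j + 3), A (x (j + 3))⟫ := real_inner_comm _ _
    have ec2 : ⟪A (x (j + 3)), z (j + 2)⟫ = ⟪z (j + 2), A (x (j + 3))⟫ := real_inner_comm _ _
    linarith [hDs, hexm, eδ3, ecz, ec1, ec2]
  -- Cauchy-Schwarz facts
  have hCS1 : ⟪A (x (j + 3)) - A (x (j + 2)), z (j + 3) - z (j + 2)⟫ ≤
      ‖A‖ * ‖x (j + 2) - x (j + 3)‖ * ‖z (j + 3) - z (j + 2)‖ := by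
    have h1 := real_inner_le_norm (A (x (j + 3)) - A (x (j + 2))) (z (j + 3) - z (j + 2))
    have h2 : ‖A (x (j + 3)) - A (x (j + 2))‖ ≤ ‖A‖ * ‖x (j + 2) - x (j + 3)‖ := by
      rw [← map_sub, norm_sub_rev (x (j + 2)) (x (j + 3))]
      exact A.le_opNorm _
    linarith [h1, mul_le_mul_of_nonneg_right h2 (norm_nonneg (z (j + 3) - z (j + 2)))]
  have hCS2 : ⟪z (j + 3) - z (j + 2), z (j + 2) - z (j + 1)⟫ ≤
      ‖z (j + 3) - z (j + 2)‖ * ‖z (j + 2) - z (j + 1)‖ := real_inner_le_norm _ _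
  -- assemble via key_ineq
  have hKEY := key_ineq αl (α j) (α (j + 1)) (α (j + 2)) (α (j + 3)) (ρ (j + 2)) (β (j + 2)) ℓ
    (‖A‖ ^ 2) ‖A‖
    (φ (x (j + 2))) (φ (x (j + 3)))
    ((G (z (j + 2))).toReal) ((G (z (j + 3))).toReal)
    ((H (y (j + 2))).toReal) ((H (y (j + 3))).toReal)
    ⟪z (j + 3), A (x (j + 3))⟫ ⟪z (j + 2), A (x (j + 3))⟫ ⟪z (j + 2), A (x (j + 2))⟫
    ⟪K (x (j + 3)), y (j + 3)⟫ ⟪K (x (j + 3)), y (j + 2)⟫ ⟪K (x (j + 2)), y (j + 2)⟫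
    ‖x (j + 2) - x (j + 3)‖ ‖y (j + 2) - y (j + 3)‖ ‖z (j + 3) - z (j + 2)‖
    ‖z (j + 2) - z (j + 1)‖
    ⟪z (j + 3) - z (j + 2), z (j + 2)⟫ ⟪z (j + 3) - z (j + 2), z (j + 2) - z (j + 1)⟫
    ⟪A (x (j + 3)) - A (x (j + 2)), z (j + 3) - z (j + 2)⟫
    (‖z (j + 2)‖ ^ 2) (‖z (j + 3)‖ ^ 2)
    hαl hαm hαK hαp hmon1 hmon2 rfl (norm_nonneg A) (norm_nonneg _) (norm_nonneg _)
    (norm_nonneg _) (expand3 (z (j + 2)) (z (j + 3))) hCS1 hCS2 hA hB hC hD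
  -- reduce the EReal goal to the real inequality
  rw [hψ1, hψ0, hω0,
    ← EReal.coe_toReal hG1top (hGproper₁ _), ← EReal.coe_toReal hG0top (hGproper₁ _),
    ← EReal.coe_toReal hH1top (hHproper₁ _), ← EReal.coe_toReal hH0top (hHproper₁ _)]
  norm_cast
  try linarith [hKEY]
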